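/- Let (K,v) be a henselian valued field and F ∈ K[x] monic, irreducible, and separable of degree n > 1, with root θ. Define Krasner's constant Ω(F) = max{ v(θ − θ') : θ' a root of F, θ' ≠ θ }. Then for every monic g ∈ K[x] with 0 < deg(g) < n, one has v(g(θ))/deg(g) ≤ Ω(F). -/

import Mathlib

open Polynomial

section Preamble

variable {Λ : Type*} [AddCommGroup Λ] [LinearOrder Λ] [IsOrderedAddMonoid Λ]

/-- A (Krull) valuation on a commutative ring, written additively, with value `⊤` at `0`. -/
def IsVal {R : Type*} [CommRing R] (μ : R → WithTop Λ) : Prop :=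
  μ 0 = ⊤ ∧ μ 1 = 0 ∧ (∀ a b, μ (a * b) = μ a + μ b) ∧ ∀ a b, min (μ a) (μ b) ≤ μ (a + b)

variable {K : Type*} [Field K]

/-- `μ` is a valuation on `K[x]` whose restriction to `K` is `v`. -/
def ExtendsVal (v : K → WithTop Λ) (μ : Polynomial K → WithTop Λ) : Prop :=
  ∀ a : K, μ (Polynomial.C a) = v a

/-- `a ∼_μ b`: the initial terms of `a` and `b` in the graded algebra of `μ` coincide. -/
def MuEquiv (μ : Polynomial K → WithTop Λ) (a b : Polynomial K) : Prop :=
  (μ a = μ b ∧ μ a < μ (a - b)) ∨ (μ a = ⊤ ∧ μ b = ⊤)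

/-- `h ∣_μ g` : the initial term of `h` divides the initial term of `g` in the
graded algebra `G_μ`. -/
def MuDvd (μ : Polynomial K → WithTop Λ) (h g : Polynomial K) : Prop :=
  ∃ c, MuEquiv μ (h * c) g

/-- `g` is `μ`-minimal: `g ∤_μ f` for all nonzero `f` of degree smaller than `deg g`. -/
def MuMinimal (μ : Polynomial K → WithTop Λ) (g : Polynomial K) : Prop :=
  ∀ f : Polynomial K, f ≠ 0 → f.degree < g.degree → ¬ MuDvd μ g f

/-- `g` is `μ`-irreducible: the principal ideal of `G_μ` generated by the initial term of `g`
is a nonzero prime ideal. -/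
def MuIrreducible (μ : Polynomial K → WithTop Λ) (g : Polynomial K) : Prop :=
  μ g ≠ ⊤ ∧ ¬ MuDvd μ g 1 ∧ ∀ a b : Polynomial K, MuDvd μ g (a * b) → MuDvd μ g a ∨ MuDvd μ g b

/-- A (MacLane–Vaquié) key polynomial for `μ`: monic, `μ`-minimal and `μ`-irreducible. -/
def IsKeyPol (μ : Polynomial K → WithTop Λ) (φ : Polynomial K) : Prop :=
  φ.Monic ∧ MuMinimal μ φ ∧ MuIrreducible μ φ

/-- A key polynomial for `μ` of minimal degree. -/
def MinKeyPol (μ : Polynomial K → WithTop Λ) (φ : Polynomial K) : Prop :=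
  IsKeyPol μ φ ∧ ∀ ψ : Polynomial K, IsKeyPol μ ψ → φ.degree ≤ ψ.degree

/-- The coefficients of the `g`-adic expansion `f = ∑ a_s g^s`, `deg a_s < deg g`. -/
noncomputable def adicCoeff (g : Polynomial K) : Polynomial K → ℕ → Polynomial K
  | f, 0 => f %ₘ g
  | f, (s + 1) => adicCoeff g (f /ₘ g) s

/-- The truncation `μ_g` of `μ` : `μ_g (∑ a_s g^s) = min_s μ (a_s g^s)`. -/
noncomputable def truncVal (μ : Polynomial K → WithTop Λ) (g f : Polynomial K) : WithTop Λ :=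
  (Finset.range (f.natDegree + 1)).inf fun s => μ (adicCoeff g f s * g ^ s)

/-- The augmented valuation `[μ; φ, γ]`, acting on `φ`-expansions by
`ν(∑ a_s φ^s) = min_s (μ(a_s) + s γ)`. -/
noncomputable def augVal (μ : Polynomial K → WithTop Λ) (φ : Polynomial K) (γ : WithTop Λ)
    (f : Polynomial K) : WithTop Λ :=
  (Finset.range (f.natDegree + 1)).inf fun s => μ (adicCoeff φ f s) + s • γ

end Preamble


section Helpers

variable {Λ : Type*} [AddCommGroup Λ] [LinearOrder Λ] [IsOrderedAddMonoid Λ]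

theorem isVal_neg' {R : Type*} [CommRing R] {μ : R → WithTop Λ} (hμ : IsVal μ) (x : R) :
    μ (-x) = μ x := by
  obtain ⟨h0, h1, hm, ha⟩ := hμ
  have hneg1 : μ (-1) = 0 := by
    have : μ ((-1 : R) * (-1)) = μ (-1) + μ (-1) := hm _ _
    rw [neg_mul_neg, one_mul, h1] at this
    cases hc : μ (-1 : R) with
    | top => rw [hc] at this; simp at this
    | coe c =>
      rw [hc] at this
      have h2 : c + c = 0 := by exact_mod_cast this.symm
      have hc0 : c = 0 := by
        rcases lt_trichotomy c 0 with h | h | h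
        · exact absurd h2 (by simpa using (add_lt_add h h).ne)
        · exact h
        · exact absurd h2 (by simpa using (add_lt_add h h).ne')
      simp [hc0]
  calc μ (-x) = μ ((-1) * x) := by ring_nf
  _ = μ (-1) + μ x := hm _ _
  _ = μ x := by rw [hneg1, zero_add]

theorem isVal_prod_le' {R : Type*} [CommRing R] {μ : R → WithTop Λ} (hμ : IsVal μ)
    (Ω : WithTop Λ) (s : Multiset R) (h : ∀ x ∈ s, μ x ≤ Ω) :
    μ s.prod ≤ Multiset.card s • Ω := by
  obtain ⟨h0, h1, hm, ha⟩ := hμ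
  induction s using Multiset.induction with
  | empty => simpa using h1.le
  | cons a t ih =>
    rw [Multiset.prod_cons, hm, Multiset.card_cons, succ_nsmul']
    exact add_le_add (h a (Multiset.mem_cons_self a t))
      (ih fun x hx => h x (Multiset.mem_cons_of_mem hx))

end Helpers

/-- Krasner bound. If `F` is monic irreducible separable of degree `n > 1` with
root `θ` and Krasner constant `Ω(F) = max { v(θ - θ') : θ' ∈ Z(F), θ' ≠ θ }`, then every monic
`g` with `0 < deg g < n` satisfies `v(g(θ))/deg g ≤ Ω(F)`. -/
theorem krasner_bound {K : Type*} [Field K] {Λ : Type*} [AddCommGroup Λ] [LinearOrder Λ] [IsOrderedAddMonoid Λ]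
    (v : K → WithTop Λ) (hv : IsVal v)
    (vbar : AlgebraicClosure K → WithTop Λ) (hvbar : IsVal vbar)
    (hextbar : ∀ a : K, vbar (algebraMap K (AlgebraicClosure K) a) = v a)
    (hhens : ∀ w : AlgebraicClosure K → WithTop Λ, IsVal w →
      (∀ a : K, w (algebraMap K (AlgebraicClosure K) a) = v a) → w = vbar)
    (F : Polynomial K) (hFm : F.Monic) (hFirr : Irreducible F) (hFsep : F.Separable)
    (hn : 1 < F.natDegree) (θ : AlgebraicClosure K) (hθ : Polynomial.aeval θ F = 0)
    (Ω : WithTop Λ)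
    (hub : ∀ θ' : AlgebraicClosure K, Polynomial.aeval θ' F = 0 → θ' ≠ θ →
      vbar (θ - θ') ≤ Ω)
    (hattain : ∃ θ' : AlgebraicClosure K, Polynomial.aeval θ' F = 0 ∧ θ' ≠ θ ∧
      vbar (θ - θ') = Ω) :
    ∀ g : Polynomial K, g.Monic → 0 < g.natDegree → g.natDegree < F.natDegree →
      vbar (Polynomial.aeval θ g) ≤ g.natDegree • Ω := by
  classical
  obtain ⟨hb0, hb1, hbm, hba⟩ := id hvbar
  -- key claim: every root β of such a g satisfies vbar (θ - β) ≤ Ω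
  have key : ∀ (g : Polynomial K), g.Monic → 0 < g.natDegree → g.natDegree < F.natDegree →
      ∀ β : (AlgebraicClosure K), Polynomial.aeval β g = 0 → vbar (θ - β) ≤ Ω := by
    intro g hgm hg0 hgn β hβ
    by_contra hle
    push_neg at hle
    have hθint : IsIntegral K θ := ⟨F, hFm, by rwa [← Polynomial.aeval_def]⟩
    have hminθ : minpoly K θ = F := (minpoly.eq_of_irreducible_of_monic hFirr hθ hFm).symm
    set L : IntermediateField K (AlgebraicClosure K) := IntermediateField.adjoin K {β} with hL
    have hβmem : β ∈ L := IntermediateField.mem_adjoin_simple_self K β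
    have hint : ∀ s : (AlgebraicClosure K), IsIntegral L s := fun s =>
      (Algebra.IsIntegral.isIntegral (R := K) s).tower_top
    -- θ ∉ L : otherwise degree contradiction
    have hθnot : θ ∉ L := by
      intro hmem
      have hβint : IsIntegral K β := Algebra.IsIntegral.isIntegral β
      haveI := IntermediateField.adjoin.finiteDimensional hβint
      have hsub : IntermediateField.adjoin K {θ} ≤ L := IntermediateField.adjoin_simple_le_iff.mpr hmem
      have h1 : Module.finrank K ↥(IntermediateField.adjoin K {θ}) = F.natDegree := by
        rw [IntermediateField.adjoin.finrank hθint, hminθ]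
      have h2 : Module.finrank K L = (minpoly K β).natDegree :=
        IntermediateField.adjoin.finrank hβint
      have hdvd : minpoly K β ∣ g := minpoly.dvd K β hβ
      have h3 : (minpoly K β).natDegree ≤ g.natDegree :=
        Polynomial.natDegree_le_of_dvd hdvd (hgm.ne_zero)
      have h4 : Module.finrank K ↥(IntermediateField.adjoin K {θ}) ≤ Module.finrank K ↥L :=
        LinearMap.finrank_le_finrank_of_injective
          (f := (IntermediateField.inclusion hsub).toLinearMap)
          (fun x y hxy => (IntermediateField.inclusion hsub).injective hxy)
      omega
    -- the minimal polynomial of θ over L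
    set h := minpoly L θ with hh
    have hθintL : IsIntegral L θ := hint θ
    have hdvdF : h ∣ F.map (algebraMap K L) := by
      rw [← hminθ]; exact minpoly.dvd_map_of_isScalarTower K L θ
    have hsep : h.Separable :=
      ((Polynomial.separable_map (algebraMap K L)).mpr hFsep).of_dvd hdvdF
    have hdeg2 : 2 ≤ h.natDegree := by
      rw [hh, minpoly.two_le_natDegree_iff hθintL]
      rintro ⟨⟨y, hy⟩, rfl⟩
      exact hθnot hy
    -- find a second root θ₁ ≠ θ of h in (AlgebraicClosure K)
    have hsplits : (h.map (algebraMap L (AlgebraicClosure K))).Splits := IsAlgClosed.splits _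
    set R := (h.map (algebraMap L (AlgebraicClosure K))).roots with hR
    have hcard : Multiset.card R = h.natDegree :=
      hsplits.natDegree_eq_card_roots.symm.trans (Polynomial.natDegree_map _)
    have hnodup : R.Nodup := Polynomial.nodup_roots (hsep.map)
    have hmapne : h.map (algebraMap L (AlgebraicClosure K)) ≠ 0 :=
      Polynomial.map_ne_zero (minpoly.ne_zero hθintL)
    have hθR : θ ∈ R := by
      rw [hR, Polynomial.mem_roots hmapne, Polynomial.IsRoot, Polynomial.eval_map,
        ← Polynomial.aeval_def]
      exact minpoly.aeval L θ
    have herase : R.erase θ ≠ 0 := by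
      intro h0
      have h1 := Multiset.card_erase_of_mem hθR
      rw [h0, Multiset.card_zero, hcard, Nat.pred_eq_sub_one] at h1
      omega
    obtain ⟨θ₁, hθ₁e⟩ := Multiset.exists_mem_of_ne_zero herase
    have hθ₁R : θ₁ ∈ R := Multiset.mem_of_mem_erase hθ₁e
    have hθ₁ne : θ₁ ≠ θ := by
      intro hEq
      exact hnodup.notMem_erase (hEq ▸ hθ₁e)
    have hθ₁root : Polynomial.aeval θ₁ h = 0 := by
      rw [hR, Polynomial.mem_roots hmapne, Polynomial.IsRoot, Polynomial.eval_map,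
        ← Polynomial.aeval_def] at hθ₁R
      exact hθ₁R
    -- extend to an algebra hom τ : (AlgebraicClosure K) →ₐ[L] (AlgebraicClosure K) with τ θ = θ₁
    obtain ⟨τ, hτθ⟩ := IntermediateField.exists_algHom_of_splits_of_aeval
      (K := (AlgebraicClosure K)) (fun s => ⟨hint s, IsAlgClosed.splits _⟩) hθ₁root
    -- vbar ∘ τ is a valuation extending v, hence equals vbar
    have hw : (fun x => vbar (τ x)) = vbar := by
      apply hhens
      · refine ⟨?_, ?_, ?_, ?_⟩
        · show vbar (τ 0) = ⊤
          rw [map_zero]; exact hb0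
        · show vbar (τ 1) = 0
          rw [map_one]; exact hb1
        · intro a b
          show vbar (τ (a * b)) = vbar (τ a) + vbar (τ b)
          rw [map_mul]; exact hbm _ _
        · intro a b
          show min (vbar (τ a)) (vbar (τ b)) ≤ vbar (τ (a + b))
          rw [map_add]; exact hba _ _
      · intro a
        have : τ (algebraMap K (AlgebraicClosure K) a) = algebraMap K (AlgebraicClosure K) a := by
          rw [IsScalarTower.algebraMap_apply K L (AlgebraicClosure K), τ.commutes]
        rw [this]; exact hextbar a
    have hτval : ∀ x, vbar (τ x) = vbar x := fun x => congrFun hw x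
    have hτβ : τ β = β := by
      have : (β : (AlgebraicClosure K)) = algebraMap L (AlgebraicClosure K) ⟨β, hβmem⟩ := rfl
      rw [this, τ.commutes]
    -- vbar (θ₁ - β) = vbar (θ - β) > Ω
    have h5 : vbar (θ₁ - β) = vbar (θ - β) := by
      have : τ (θ - β) = θ₁ - β := by rw [map_sub, hτθ, hτβ]
      rw [← this, hτval]
    -- θ₁ is a root of F
    have hθ₁F : Polynomial.aeval θ₁ F = 0 := by
      obtain ⟨q, hq⟩ := hdvdF
      have : Polynomial.aeval θ₁ (F.map (algebraMap K L)) = 0 := by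
        rw [hq, map_mul, hθ₁root, zero_mul]
      rwa [Polynomial.aeval_map_algebraMap] at this
    have hub' : vbar (θ - θ₁) ≤ Ω := hub θ₁ hθ₁F hθ₁ne
    -- ultrametric: vbar (θ - θ₁) > Ω, contradiction
    have h6 : Ω < vbar (θ - θ₁) := by
      have heq : θ - θ₁ = (θ - β) + (β - θ₁) := by ring
      have h7 : vbar (β - θ₁) = vbar (θ - β) := by
        rw [show β - θ₁ = -(θ₁ - β) by ring, isVal_neg' hvbar, h5]
      calc Ω < min (vbar (θ - β)) (vbar (β - θ₁)) := by
            rw [h7, min_self]; exact hle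
        _ ≤ vbar ((θ - β) + (β - θ₁)) := hba _ _
        _ = vbar (θ - θ₁) := by rw [← heq]
    exact absurd hub' (not_le.mpr h6)
  -- main argument: factor g over (AlgebraicClosure K)
  intro g hgm hg0 hgn
  have hsplits : (g.map (algebraMap K (AlgebraicClosure K))).Splits := IsAlgClosed.splits _
  set R := (g.map (algebraMap K (AlgebraicClosure K))).roots with hR
  have hcard : Multiset.card R = g.natDegree :=
    hsplits.natDegree_eq_card_roots.symm.trans (Polynomial.natDegree_map _)
  have hmapne : g.map (algebraMap K (AlgebraicClosure K)) ≠ 0 := Polynomial.map_ne_zero hgm.ne_zero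
  have hfac : g.map (algebraMap K (AlgebraicClosure K)) = (R.map fun a => Polynomial.X - Polynomial.C a).prod :=
    hsplits.eq_prod_roots_of_monic (hgm.map (algebraMap K (AlgebraicClosure K)))
  have heval : Polynomial.aeval θ g = (R.map fun a => θ - a).prod := by
    rw [Polynomial.aeval_def, ← Polynomial.eval_map, hfac, Polynomial.eval_multiset_prod,
      Multiset.map_map]
    congr 1
    apply Multiset.map_congr rfl
    intro a _
    simp
  rw [heval, ← hcard, ← Multiset.card_map (fun a => θ - a) R]
  apply isVal_prod_le' hvbar
  intro x hx
  obtain ⟨a, haR, rfl⟩ := Multiset.mem_map.mp hx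
  apply key g hgm hg0 hgn a
  rw [hR, Polynomial.mem_roots hmapne, Polynomial.IsRoot, Polynomial.eval_map,
    ← Polynomial.aeval_def] at haR
  exact haR
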